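/- Let f : ℝ → ℂ be differentiable and integrable on ℝ with f vanishing at ±∞ (i.e., f(t) → 0 as t → ±∞). Then for every x ∈ ℂ \ ℝ, the derivative of the Cauchy transform satisfies C(f)'(x) = C(f')(x), i.e., d/dx ∫ f(t)/(t−x) dt = ∫ f'(t)/(t−x) dt. -/

import Mathlib

open MeasureTheory Filter Set Metric

lemma im_le_norm_sub (x : ℂ) (t : ℝ) : |x.im| ≤ ‖(t : ℂ) - x‖ := by
  have h := Complex.abs_im_le_norm ((t : ℂ) - x)
  rw [Complex.sub_im, Complex.ofReal_im, zero_sub, abs_neg] at h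
  simpa using h

lemma bound_aux {a b C : ℝ} (hC : 0 < C) (hb : C ≤ b) (ha : 0 ≤ a) :
    a / b ≤ C⁻¹ * a := by
  rw [div_eq_inv_mul]
  gcongr

/-- For a differentiable, integrable `f : ℝ → ℂ` vanishing at `±∞`,
the derivative of the Cauchy transform satisfies `C(f)'(x) = C(f')(x)` for `x` off ℝ. -/
theorem cauchy_transform_deriv (f f' : ℝ → ℂ)
    (hderiv : ∀ t : ℝ, HasDerivAt f (f' t) t)
    (hint : Integrable f)
    (hint' : Integrable f')
    (htop : Tendsto f atTop (nhds 0))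
    (hbot : Tendsto f atBot (nhds 0))
    (x : ℂ) (hx : x.im ≠ 0) :
    HasDerivAt (fun z : ℂ => ∫ t : ℝ, f t / ((t : ℂ) - z))
      (∫ t : ℝ, f' t / ((t : ℂ) - x)) x := by
  set c : ℝ := |x.im| with hc
  have hc0 : 0 < c := abs_pos.mpr hx
  have hnorm : ∀ t : ℝ, c ≤ ‖(t : ℂ) - x‖ := fun t => im_le_norm_sub x t
  have hne : ∀ t : ℝ, (t : ℂ) - x ≠ 0 := by
    intro t h
    have := hnorm t
    rw [h, norm_zero] at this
    exact absurd this (not_le.mpr hc0)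
  have hmden : ∀ z : ℂ, AEStronglyMeasurable (fun t : ℝ => (t : ℂ) - z) volume :=
    fun z => (Complex.measurable_ofReal.sub measurable_const).aestronglyMeasurable
  -- integrability of f'(t)/(t-x)
  have hint1 : Integrable (fun t : ℝ => f' t / ((t : ℂ) - x)) := by
    refine (hint'.norm.const_mul c⁻¹).mono'
      (by simp only [div_eq_mul_inv]
          exact hint'.aestronglyMeasurable.mul
            ((Complex.measurable_ofReal.sub measurable_const).inv.aestronglyMeasurable)) ?_
    filter_upwards with t
    rw [norm_div]
    exact bound_aux hc0 (hnorm t) (norm_nonneg _)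
  -- integrability of f(t)/(t-x)^2
  have hint2 : Integrable (fun t : ℝ => f t / ((t : ℂ) - x) ^ 2) := by
    refine (hint.norm.const_mul (c ^ 2)⁻¹).mono'
      (by simp only [div_eq_mul_inv]
          exact hint.aestronglyMeasurable.mul
            (((Complex.measurable_ofReal.sub measurable_const).pow_const 2).inv.aestronglyMeasurable)) ?_
    filter_upwards with t
    rw [norm_div, norm_pow]
    exact bound_aux (by positivity) (pow_le_pow_left₀ hc0.le (hnorm t) 2) (norm_nonneg _)
  -- the function g(t) = f t / (t - x) and its derivative
  set g : ℝ → ℂ := fun t => f t / ((t : ℂ) - x) with hg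
  set g' : ℝ → ℂ := fun t => f' t / ((t : ℂ) - x) - f t / ((t : ℂ) - x) ^ 2 with hg'
  have hgderiv : ∀ t : ℝ, HasDerivAt g (g' t) t := by
    intro t
    have hsub : HasDerivAt (fun s : ℝ => (s : ℂ) - x) 1 t := by
      simpa using (Complex.ofRealCLM.hasDerivAt (x := t)).sub_const x
    have h : HasDerivAt g ((f' t * ((t : ℂ) - x) - f t * 1) / ((t : ℂ) - x) ^ 2) t :=
      (hderiv t).div hsub (hne t)
    convert h using 1
    rw [mul_one, sub_div, sq, mul_div_mul_right _ _ (hne t)]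
    simp only [hg', ← sq]
  -- g tends to 0 at ±∞
  have hgbound : ∀ t : ℝ, ‖g t‖ ≤ c⁻¹ * ‖f t‖ := by
    intro t
    rw [hg, norm_div]
    exact bound_aux hc0 (hnorm t) (norm_nonneg _)
  have hgtop : Tendsto g atTop (nhds 0) := by
    apply squeeze_zero_norm hgbound
    simpa using (htop.norm.const_mul c⁻¹)
  have hgbot : Tendsto g atBot (nhds 0) := by
    apply squeeze_zero_norm hgbound
    simpa using (hbot.norm.const_mul c⁻¹)
  -- integral of g' over ℝ is zero
  have hg'int : Integrable g' := hint1.sub hint2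
  have hsplit : ∫ t : ℝ, g' t = (∫ t in Iic (0:ℝ), g' t) + ∫ t in Ioi (0:ℝ), g' t :=
    (intervalIntegral.integral_Iic_add_Ioi hg'int.integrableOn hg'int.integrableOn).symm
  have hIic : ∫ t in Iic (0:ℝ), g' t = g 0 - 0 :=
    MeasureTheory.integral_Iic_of_hasDerivAt_of_tendsto'
      (fun t _ => hgderiv t) hg'int.integrableOn hgbot
  have hIoi : ∫ t in Ioi (0:ℝ), g' t = 0 - g 0 :=
    MeasureTheory.integral_Ioi_of_hasDerivAt_of_tendsto'
      (fun t _ => hgderiv t) hg'int.integrableOn hgtop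
  have hzero : ∫ t : ℝ, g' t = 0 := by rw [hsplit, hIic, hIoi]; ring
  have hparts : ∫ t : ℝ, f' t / ((t : ℂ) - x) = ∫ t : ℝ, f t / ((t : ℂ) - x) ^ 2 := by
    rw [hg', integral_sub hint1 hint2, sub_eq_zero] at hzero
    exact hzero
  rw [hparts]
  -- differentiation under the integral sign
  set ε : ℝ := c / 2 with hε
  have hε0 : 0 < ε := by positivity
  have hball : ∀ z ∈ ball x ε, ∀ t : ℝ, ε ≤ ‖(t : ℂ) - z‖ := by
    intro z hz t
    have h1 : |z.im| ≤ ‖(t : ℂ) - z‖ := im_le_norm_sub z t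
    have h2 : |x.im - z.im| ≤ ‖x - z‖ := by
      have := Complex.abs_im_le_norm (x - z)
      simpa [Complex.sub_im] using this
    have h3 : ‖x - z‖ < ε := by
      rw [mem_ball, dist_eq_norm] at hz
      rwa [norm_sub_rev]
    have h4 : c - ε ≤ |z.im| := by
      have := abs_sub_abs_le_abs_sub x.im z.im
      have h5 : |x.im - z.im| < ε := lt_of_le_of_lt h2 h3
      simp only [← hc] at this ⊢
      linarith
    have : ε ≤ |z.im| := by rw [hε] at h4 ⊢; linarith
    linarith
  have hballne : ∀ z ∈ ball x ε, ∀ t : ℝ, (t : ℂ) - z ≠ 0 := by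
    intro z hz t h
    have := hball z hz t
    rw [h, norm_zero] at this
    exact absurd this (not_le.mpr hε0)
  have key := hasDerivAt_integral_of_dominated_loc_of_deriv_le (μ := volume)
    (F := fun (z : ℂ) (t : ℝ) => f t / ((t : ℂ) - z))
    (F' := fun (z : ℂ) (t : ℝ) => f t / ((t : ℂ) - z) ^ 2)
    (x₀ := x) (bound := fun t => (ε ^ 2)⁻¹ * ‖f t‖) (ball_mem_nhds x hε0)
    (Eventually.of_forall fun z => by
      simp only [div_eq_mul_inv]
      exact hint.aestronglyMeasurable.mul
        ((Complex.measurable_ofReal.sub measurable_const).inv.aestronglyMeasurable))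
    (by
      refine (hint.norm.const_mul c⁻¹).mono'
        (by simp only [div_eq_mul_inv]
            exact hint.aestronglyMeasurable.mul
              ((Complex.measurable_ofReal.sub measurable_const).inv.aestronglyMeasurable)) ?_
      filter_upwards with t
      rw [norm_div]
      exact bound_aux hc0 (hnorm t) (norm_nonneg _))
    (by simp only [div_eq_mul_inv]
        exact hint.aestronglyMeasurable.mul
          (((Complex.measurable_ofReal.sub measurable_const).pow_const 2).inv.aestronglyMeasurable))
    (by
      filter_upwards with t z hz
      rw [norm_div, norm_pow]
      exact bound_aux (by positivity) (pow_le_pow_left₀ hε0.le (hball z hz t) 2)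
        (norm_nonneg _))
    (hint.norm.const_mul _)
    (by
      filter_upwards with t z hz
      have hsub : HasDerivAt (fun w : ℂ => (t : ℂ) - w) (-1) z := by
        simpa using ((hasDerivAt_id z).const_sub (t : ℂ))
      have h : HasDerivAt (fun w : ℂ => f t / ((t : ℂ) - w))
          ((0 * ((t : ℂ) - z) - f t * (-1)) / ((t : ℂ) - z) ^ 2) z :=
        (hasDerivAt_const z (f t)).div hsub (hballne z hz t)
      simpa using h)
  exact key.2
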